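/- Suppose the growth function satisfies f(1) = 1 and f(k) = 2^{k−1} + 1 for k ≥ 2. Then for every fixed d ≥ 1, the quotient N(d,μ) / (2^μ · μ^{d−1}) tends to 1/(2^{d−1}·(d−1)!) as μ → ∞. -/

import Mathlib

/-- Multi-indices `i : Fin d → ℕ` with `i k ≥ 1` for all `k` and `∑ k, i k = d + μ`. -/
def smolyakIndices (d μ : ℕ) : Finset (Fin d → ℕ) :=
  (Fintype.piFinset fun _ => Finset.Icc 1 (d + μ)).filter fun i => ∑ k, i k = d + μ

/-- The Smolyak grid `Γ(d, μ)` based on the node sets `S`. -/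
noncomputable def smolyakGrid (S : ℕ → Finset ℝ) (d μ : ℕ) : Finset (Fin d → ℝ) :=
  (smolyakIndices d μ).biUnion fun i => Fintype.piFinset fun k => S (i k)

/-- `N(d, μ)`: the number of nodes in the Smolyak grid. -/
noncomputable def smolyakCard (S : ℕ → Finset ℝ) (d μ : ℕ) : ℕ :=
  (smolyakGrid S d μ).card

namespace SmolyakAux

open Finset

/-- the size of the `t`-th difference set (level `t+1`). -/
def g : ℕ → ℕ
  | 0 => 1
  | 1 => 2
  | (t+2) => 2 ^ (t+1)

/-- exact count recursion. -/
def F : ℕ → ℕ → ℕ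
  | 0, _ => 1
  | (d+1), m => ∑ t ∈ Finset.range (m+1), g t * F d (m - t)

/-- difference sets -/
noncomputable def Dset (S : ℕ → Finset ℝ) : ℕ → Finset ℝ
  | 0 => ∅
  | 1 => S 1
  | (j+2) => S (j+2) \ S (j+1)

/-- lower index set: `i k ≥ 1`, `∑ i ≤ d + μ`. -/
def LIdx (d μ : ℕ) : Finset (Fin d → ℕ) :=
  (Fintype.piFinset fun _ => Finset.Icc 1 (d + μ)).filter fun i => ∑ k, i k ≤ d + μ

/-- shifted index set: `∑ j ≤ m`, entries `≤ m`. -/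
def Tset (d m : ℕ) : Finset (Fin d → ℕ) :=
  (Fintype.piFinset fun _ => Finset.range (m+1)).filter fun j => ∑ k, j k ≤ m

section S
variable (S : ℕ → Finset ℝ)

lemma S_mono (hS_nested : ∀ k, 1 ≤ k → S k ⊆ S (k + 1))
    {a b : ℕ} (ha : 1 ≤ a) (hab : a ≤ b) : S a ⊆ S b := by
  induction b, hab using Nat.le_induction with
  | base => exact subset_rfl
  | succ b hb ih => exact ih.trans (hS_nested b (le_trans ha hb))

lemma Dset_subset {j : ℕ} (hj : 1 ≤ j) : Dset S j ⊆ S j := by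
  match j, hj with
  | 1, _ => exact subset_rfl
  | (j+2), _ => exact sdiff_subset

lemma Dset_disjoint (hS_nested : ∀ k, 1 ≤ k → S k ⊆ S (k + 1))
    {a b : ℕ} (ha : 1 ≤ a) (hab : a < b) :
    Disjoint (Dset S a) (Dset S b) := by
  obtain ⟨c, rfl⟩ : ∃ c, b = c + 2 := ⟨b - 2, by omega⟩
  have h1 : Dset S a ⊆ S (c+1) :=
    (Dset_subset S ha).trans (S_mono S hS_nested ha (by omega))
  have h2 : Disjoint (S (c+1)) (Dset S (c+2)) := by
    simp [Dset, disjoint_sdiff]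
  exact (h2.symm.mono_right h1).symm

/-- The Smolyak grid is the union of products of difference sets over the lower set. -/
lemma grid_eq (hS_nested : ∀ k, 1 ≤ k → S k ⊆ S (k + 1)) (d μ : ℕ) (hd : 1 ≤ d) :
    smolyakGrid S d μ = (LIdx d μ).biUnion fun i => Fintype.piFinset fun k => Dset S (i k) := by
  ext x
  simp only [smolyakGrid, smolyakIndices, LIdx, mem_biUnion, mem_filter,
    Fintype.mem_piFinset, mem_Icc]
  constructor
  · rintro ⟨i, ⟨hi1, hi2⟩, hx⟩
    -- define minimal levels
    have hne : ∀ k, ∃ j, 1 ≤ j ∧ x k ∈ S j := fun k => ⟨i k, (hi1 k).1, hx k⟩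
    classical
    set L : Fin d → ℕ := fun k => Nat.find (hne k) with hL
    have hL1 : ∀ k, 1 ≤ L k ∧ x k ∈ S (L k) := fun k => Nat.find_spec (hne k)
    have hLle : ∀ k, L k ≤ i k := fun k => Nat.find_min' (hne k) ⟨(hi1 k).1, hx k⟩
    refine ⟨L, ⟨fun k => ⟨(hL1 k).1, le_trans (hLle k) (hi1 k).2⟩,
      le_trans (Finset.sum_le_sum fun k _ => hLle k) (le_of_eq hi2)⟩, fun k => ?_⟩
    -- x k ∈ Dset (L k)
    rcases (hL1 k) with ⟨h1, h2⟩
    by_cases hc : L k = 1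
    · rw [hc] at h2 ⊢; simpa [Dset] using h2
    · obtain ⟨j, hLk⟩ : ∃ j, L k = j + 2 := ⟨L k - 2, by omega⟩
      have hnot : x k ∉ S (j+1) := by
        intro hmem
        exact Nat.find_min (hne k) (show j+1 < L k by omega) ⟨by omega, hmem⟩
      rw [hLk] at h2
      rw [hLk]
      simp [Dset, h2, hnot]
  · rintro ⟨i, ⟨hi1, hi2⟩, hx⟩
    -- bump up the first coordinate to reach exact sum
    obtain ⟨k0⟩ : Nonempty (Fin d) := ⟨⟨0, hd⟩⟩
    classical
    set r := d + μ - ∑ k, i k with hr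
    set i' : Fin d → ℕ := Function.update i k0 (i k0 + r) with hi'
    have hsum0 : ∑ k ∈ Finset.univ \ {k0}, i k + i k0 = ∑ k, i k := by
      rw [Finset.sdiff_singleton_eq_erase, add_comm,
        Finset.add_sum_erase _ _ (Finset.mem_univ k0)]
    have hrle : ∑ k, i k ≤ d + μ := hi2
    have hsum' : ∑ k, i' k = d + μ := by
      rw [hi', Finset.sum_update_of_mem (Finset.mem_univ k0)]
      omega
    have hub : ∀ k, i' k ≤ d + μ := by
      intro k
      have : i' k ≤ ∑ k, i' k := Finset.single_le_sum (fun _ _ => Nat.zero_le _) (mem_univ k)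
      omega
    refine ⟨i', ⟨fun k => ⟨?_, hub k⟩, hsum'⟩, fun k => ?_⟩
    · rcases eq_or_ne k k0 with h | h
      · have := (hi1 k0).1
        simp only [hi', h, Function.update_self]
        omega
      · simp only [hi', Function.update_of_ne h]
        exact (hi1 k).1
    · have hxk : x k ∈ S (i k) := Dset_subset S (hi1 k).1 (hx k)
      have hle : i k ≤ i' k := by
        rcases eq_or_ne k k0 with h | h
        · simp only [hi', h, Function.update_self]; omega
        · simp [hi', Function.update_of_ne h]
      exact S_mono S hS_nested (hi1 k).1 hle hxk

end S

end SmolyakAux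

namespace SmolyakAux
open Finset

lemma card_grid (S : ℕ → Finset ℝ) (hS_nested : ∀ k, 1 ≤ k → S k ⊆ S (k + 1))
    (d μ : ℕ) (hd : 1 ≤ d) :
    smolyakCard S d μ = ∑ i ∈ LIdx d μ, ∏ k, (Dset S (i k)).card := by
  rw [smolyakCard, grid_eq S hS_nested d μ hd, Finset.card_biUnion]
  · exact Finset.sum_congr rfl fun i _ => Fintype.card_piFinset _
  · intro i hi j hj hij
    simp only [Finset.mem_coe, LIdx, mem_filter, Fintype.mem_piFinset, mem_Icc] at hi hj
    obtain ⟨k, hk⟩ : ∃ k, i k ≠ j k := by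
      by_contra h
      push_neg at h
      exact hij (funext h)
    have hik := (hi.1 k).1
    have hjk := (hj.1 k).1
    have hdisj : Disjoint (Dset S (i k)) (Dset S (j k)) := by
      rcases hk.lt_or_gt with h | h
      · exact Dset_disjoint S hS_nested hik h
      · exact (Dset_disjoint S hS_nested hjk h).symm
    exact Fintype.piFinset_disjoint_of_disjoint _ _ hdisj

/-- card of difference sets -/
lemma card_Dset (S : ℕ → Finset ℝ) (f : ℕ → ℕ) (hf1 : f 1 = 1)
    (hf : ∀ k, 2 ≤ k → f k = 2 ^ (k - 1) + 1)
    (hS_nested : ∀ k, 1 ≤ k → S k ⊆ S (k + 1))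
    (hS_card : ∀ k, 1 ≤ k → (S k).card = f k) (t : ℕ) :
    (Dset S (t + 1)).card = g t := by
  match t with
  | 0 => simpa [Dset, g] using (hS_card 1 le_rfl).trans hf1
  | (t+1) =>
    have hsub : S (t+1) ⊆ S (t+2) := hS_nested (t+1) (by omega)
    have h1 : (S (t+2)).card = 2^(t+1) + 1 := by
      simpa using (hS_card (t+2) (by omega)).trans (hf (t+2) (by omega))
    have h2 : (S (t+1)).card = if t = 0 then 1 else 2^t + 1 := by
      rcases Nat.eq_zero_or_pos t with rfl | ht
      · simpa using (hS_card 1 le_rfl).trans hf1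
      · simp only [if_neg ht.ne']
        simpa using (hS_card (t+1) (by omega)).trans (hf (t+1) (by omega))
    have hD : (Dset S (t+2)).card = (S (t+2)).card - (S (t+1)).card := by
      simp [Dset, Finset.card_sdiff_of_subset hsub]
    show (Dset S (t+2)).card = g (t+1)
    rw [hD, h1, h2]
    rcases Nat.eq_zero_or_pos t with rfl | ht
    · simp [g]
    · obtain ⟨s, rfl⟩ : ∃ s, t = s + 1 := ⟨t - 1, by omega⟩
      simp only [if_neg (by omega : ¬ s+1 = 0)]
      show 2^(s+1+1) + 1 - (2^(s+1)+1) = g (s+2)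
      have hg : g (s+2) = 2^(s+1) := rfl
      have h2 : (2:ℕ)^(s+1+1) = 2 * 2^(s+1) := by ring
      omega

end SmolyakAux

namespace SmolyakAux
open Finset

lemma Tset_succ (d m : ℕ) :
    Tset (d+1) m = (Finset.range (m+1)).biUnion
      (fun t => (Tset d (m - t)).image (Fin.cons t)) := by
  ext x
  simp only [Tset, mem_filter, Fintype.mem_piFinset, mem_range, mem_biUnion, mem_image]
  constructor
  · rintro ⟨hx1, hx2⟩
    have hx0 : x 0 ≤ ∑ k, x k :=
      Finset.single_le_sum (f := x) (fun _ _ => Nat.zero_le _) (mem_univ (0 : Fin (d+1)))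
    have h0 : x 0 ≤ m := le_trans hx0 hx2
    have hsum : x 0 + ∑ k, Fin.tail x k = ∑ k, x k := (Fin.sum_univ_succ x).symm
    refine ⟨x 0, by omega, Fin.tail x, ⟨⟨fun k => ?_, by omega⟩, Fin.cons_self_tail x⟩⟩
    have htk : Fin.tail x k ≤ ∑ l, Fin.tail x l :=
      Finset.single_le_sum (f := Fin.tail x) (fun _ _ => Nat.zero_le _) (mem_univ k)
    omega
  · rintro ⟨t, ht, j, ⟨⟨hj1, hj2⟩, rfl⟩⟩
    have hsum : ∑ k, Fin.cons (α := fun _ => ℕ) t j k = t + ∑ k, j k :=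
      Fin.sum_univ_succ _
    constructor
    · intro k
      refine Fin.cases ?_ ?_ k
      · simpa using by omega
      · intro kk
        simp only [Fin.cons_succ]
        have := hj1 kk
        omega
    · omega

lemma sum_Tset (d m : ℕ) : ∑ j ∈ Tset d m, ∏ k, g (j k) = F d m := by
  induction d generalizing m with
  | zero =>
    have : Tset 0 m = {(fun k => 0 : Fin 0 → ℕ)} := by
      ext x
      simp only [Tset, mem_filter, Fintype.mem_piFinset, mem_singleton]
      constructor
      · intro _; exact funext fun k => k.elim0
      · rintro rfl; simp
    simp [this, F]
  | succ d ih =>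
    rw [Tset_succ, Finset.sum_biUnion, F]
    · refine Finset.sum_congr rfl fun t ht => ?_
      rw [Finset.sum_image (fun a _ b _ h => Fin.cons_right_injective _ h)]
      rw [← ih (m - t), Finset.mul_sum]
      refine Finset.sum_congr rfl fun j hj => ?_
      rw [Fin.prod_univ_succ]
      simp
    · intro a ha b hb hab
      simp only [Finset.disjoint_left, mem_image]
      rintro x ⟨j, hj, rfl⟩ ⟨j', hj', hx⟩
      apply hab
      have := congrFun hx 0
      simpa using this.symm

lemma sum_LIdx (S : ℕ → Finset ℝ) (f : ℕ → ℕ) (hf1 : f 1 = 1)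
    (hf : ∀ k, 2 ≤ k → f k = 2 ^ (k - 1) + 1)
    (hS_nested : ∀ k, 1 ≤ k → S k ⊆ S (k + 1))
    (hS_card : ∀ k, 1 ≤ k → (S k).card = f k)
    (d μ : ℕ) (hd : 1 ≤ d) :
    ∑ i ∈ LIdx d μ, ∏ k, (Dset S (i k)).card = F d μ := by
  rw [← sum_Tset d μ]
  refine Finset.sum_nbij' (fun i => fun k => i k - 1) (fun j => fun k => j k + 1)
    ?_ ?_ ?_ ?_ ?_
  · intro i hi
    simp only [LIdx, mem_filter, Fintype.mem_piFinset, mem_Icc] at hi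
    obtain ⟨hi1, hi2⟩ := hi
    have hkey : ∑ k, (i k - 1) + d = ∑ k, i k := by
      have : ∑ k, (i k - 1) + ∑ k : Fin d, 1 = ∑ k, ((i k - 1) + 1) :=
        (Finset.sum_add_distrib).symm
      have h2 : ∑ k, ((i k - 1) + 1) = ∑ k, i k :=
        Finset.sum_congr rfl fun k _ => by have := (hi1 k).1; omega
      simpa using this.trans h2
    have h3 : ∀ k, i k - 1 ≤ ∑ l, (i l - 1) := fun k =>
      Finset.single_le_sum (f := fun l => i l - 1) (fun _ _ => Nat.zero_le _) (mem_univ k)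
    simp only [Tset, mem_filter, Fintype.mem_piFinset, mem_range]
    constructor
    · intro k
      show i k - 1 < μ + 1
      have := h3 k
      omega
    · show ∑ k, (i k - 1) ≤ μ
      omega
  · intro j hj
    simp only [Tset, mem_filter, Fintype.mem_piFinset, mem_range] at hj
    obtain ⟨hj1, hj2⟩ := hj
    have hkey : ∑ k, (j k + 1) = ∑ k, j k + d := by
      rw [Finset.sum_add_distrib]; simp
    simp only [LIdx, mem_filter, Fintype.mem_piFinset, mem_Icc]
    refine ⟨fun k => ?_, ?_⟩
    · show 1 ≤ j k + 1 ∧ j k + 1 ≤ d + μ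
      have := hj1 k
      omega
    · show ∑ k, (j k + 1) ≤ d + μ
      omega
  · intro i hi
    simp only [LIdx, mem_filter, Fintype.mem_piFinset, mem_Icc] at hi
    funext k
    show (i k - 1) + 1 = i k
    have := (hi.1 k).1
    omega
  · intro j hj
    funext k
    show (j k + 1) - 1 = j k
    omega
  · intro i hi
    simp only [LIdx, mem_filter, Fintype.mem_piFinset, mem_Icc] at hi
    refine Finset.prod_congr rfl fun k _ => ?_
    have h1 : i k = (i k - 1) + 1 := by have := (hi.1 k).1; omega
    rw [h1, card_Dset S f hf1 hf hS_nested hS_card]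

/-- The main combinatorial identity. -/
lemma smolyakCard_eq_F (S : ℕ → Finset ℝ) (f : ℕ → ℕ) (hf1 : f 1 = 1)
    (hf : ∀ k, 2 ≤ k → f k = 2 ^ (k - 1) + 1)
    (hS_nested : ∀ k, 1 ≤ k → S k ⊆ S (k + 1))
    (hS_card : ∀ k, 1 ≤ k → (S k).card = f k)
    (d μ : ℕ) (hd : 1 ≤ d) :
    smolyakCard S d μ = F d μ := by
  rw [card_grid S hS_nested d μ hd, sum_LIdx S f hf1 hf hS_nested hS_card d μ hd]

end SmolyakAux

namespace SmolyakAux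
open Finset

lemma two_pow_sum (n : ℕ) : ∑ t ∈ range n, 2^t = 2^n - 1 := by
  induction n with
  | zero => simp
  | succ n ih =>
    rw [Finset.sum_range_succ, ih]
    have : 1 ≤ 2^n := Nat.one_le_two_pow
    have : (2:ℕ)^(n+1) = 2 * 2^n := by ring
    omega

lemma sum_two_pow_rev (n : ℕ) : ∑ t ∈ range n, 2^(n - t) = 2^(n+1) - 2 := by
  rw [← Finset.sum_range_reflect]
  have h : ∀ t ∈ range n, 2^(n - (n - 1 - t)) = 2 * 2^t := by
    intro t ht
    rw [mem_range] at ht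
    have : n - (n - 1 - t) = t + 1 := by omega
    rw [this]; ring
  rw [Finset.sum_congr rfl h, ← Finset.mul_sum, two_pow_sum]
  have : 1 ≤ 2^n := Nat.one_le_two_pow
  have : (2:ℕ)^(n+1) = 2 * 2^n := by ring
  omega

lemma F_rec (d m : ℕ) (hm : 1 ≤ m) :
    F (d+1) m = F d m + 2 * F d (m-1) + ∑ n ∈ range (m-1), 2^(m-1-n) * F d n := by
  obtain ⟨m', rfl⟩ : ∃ m', m = m' + 1 := ⟨m - 1, by omega⟩
  show (∑ t ∈ Finset.range (m'+2), g t * F d (m'+1 - t)) = _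
  rw [Finset.sum_range_succ', Finset.sum_range_succ']
  have h1 : ∀ t ∈ range m', g (t+1+1) * F d (m'+1 - (t+1+1)) = 2^(t+1) * F d (m'-1-t) := by
    intro t ht
    have : m'+1 - (t+1+1) = m'-1-t := by omega
    rw [this]; rfl
  rw [Finset.sum_congr rfl h1]
  have h2 : ∑ n ∈ range (m'+1-1), 2^(m'+1-1-n) * F d n
      = ∑ t ∈ range m', 2^(t+1) * F d (m'-1-t) := by
    simp only [Nat.add_sub_cancel]
    rw [← Finset.sum_range_reflect]
    refine Finset.sum_congr rfl fun t ht => ?_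
    rw [mem_range] at ht
    have : m' - (m' - 1 - t) = t + 1 := by omega
    rw [this]
  rw [h2]
  show _ + g 1 * F d (m'+1-1) + g 0 * F d (m'+1) = _
  simp only [Nat.add_sub_cancel, g]
  ring

noncomputable def H (d m : ℕ) : ℝ := ((F d m : ℝ) - 1) / 2 ^ m

lemma H_eq (d m : ℕ) : (F d m : ℝ) = 2^m * H d m + 1 := by
  have : (2:ℝ)^m ≠ 0 := by positivity
  rw [H, mul_div_assoc', mul_div_cancel_left₀ _ this]; ring

lemma H_rec (d m : ℕ) (hm : 1 ≤ m) :
    H (d+1) m = H d m + H d (m-1) + 1 + (1/2) * ∑ n ∈ range (m-1), H d n := by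
  obtain ⟨m', rfl⟩ : ∃ m', m = m' + 1 := ⟨m - 1, by omega⟩
  have h2 : (2:ℝ)^(m'+1) ≠ 0 := by positivity
  have key : (F (d+1) (m'+1) : ℝ)
      = 2^(m'+1) * (H d (m'+1) + H d m' + 1 + (1/2) * ∑ n ∈ range m', H d n) + 1 := by
    have hc := F_rec d (m'+1) (by omega)
    simp only [Nat.add_sub_cancel] at hc
    rw [hc]
    push_cast
    rw [H_eq d (m'+1), H_eq d m']
    have hsum1 : ∑ n ∈ range m', ((2:ℝ)^(m'-n) * (F d n : ℝ))
        = ∑ n ∈ range m', (2^(m'-n) * (2^n * H d n + 1)) :=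
      Finset.sum_congr rfl fun n _ => by rw [H_eq d n]
    have hsum2 : ∀ n ∈ range m', (2:ℝ)^(m'-n) * (2^n * H d n + 1)
        = 2^(m'+1) * ((1/2) * H d n) + 2^(m'-n) := by
      intro n hn
      rw [mem_range] at hn
      have hpow : (2:ℝ)^(m'-n) * 2^n = 2^m' := by
        rw [← pow_add]
        congr 1
        omega
      have hpow2 : (2:ℝ)^(m'+1) * (1/2) = 2^m' := by
        rw [pow_succ]; ring
      calc (2:ℝ)^(m'-n) * (2^n * H d n + 1)
          = (2^(m'-n) * 2^n) * H d n + 2^(m'-n) := by ring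
        _ = 2^(m'+1) * ((1/2) * H d n) + 2^(m'-n) := by rw [hpow, ← hpow2]; ring
    have hsum3 : ∑ n ∈ range m', ((2:ℝ)^(m'-n)) = 2^(m'+1) - 2 := by
      have := sum_two_pow_rev m'
      have hcast : ((∑ t ∈ range m', 2^(m'-t) : ℕ) : ℝ) = ∑ t ∈ range m', ((2:ℝ)^(m'-t)) := by
        push_cast
        rfl
      have h2' : ((2:ℕ)^(m'+1) - 2 : ℕ) = ((2:ℝ)^(m'+1) - 2 : ℝ) := by
        have : 2 ≤ 2^(m'+1) := by
          have : 1 ≤ 2^m' := Nat.one_le_two_pow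
          have : (2:ℕ)^(m'+1) = 2*2^m' := by ring
          omega
        push_cast [this]
        ring
      rw [← hcast, this, h2']
    rw [hsum1, Finset.sum_congr rfl hsum2, Finset.sum_add_distrib, hsum3, Finset.mul_sum]
    rw [← Finset.mul_sum]
    ring
  show H (d+1) (m'+1) = _
  rw [H, key]
  simp only [Nat.add_sub_cancel]
  field_simp
  ring

end SmolyakAux

namespace SmolyakAux
open Finset

/-- eventually equal to a combination of binomial coefficients with coeffs `a`, degree `D`. -/
def EvP (D : ℕ) (a : ℕ → ℝ) (h : ℕ → ℝ) : Prop :=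
  ∃ N, ∀ m, N ≤ m → h m = ∑ j ∈ range (D+1), a j * (m.choose j : ℝ)

lemma pad_sum {D D' : ℕ} (hDD : D ≤ D') (a : ℕ → ℝ) (m : ℕ) :
    ∑ j ∈ range (D'+1), (if j ≤ D then a j else 0) * (m.choose j : ℝ)
      = ∑ j ∈ range (D+1), a j * (m.choose j : ℝ) := by
  rw [← Finset.sum_subset (Finset.range_subset_range.2 (by omega : D+1 ≤ D'+1))]
  · exact Finset.sum_congr rfl fun j hj => by
      rw [mem_range] at hj
      rw [if_pos (by omega)]
  · intro j _ hj
    rw [mem_range] at hj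
    rw [if_neg (by omega), zero_mul]

lemma nat_sum_range_choose (m j : ℕ) :
    ∑ n ∈ range m, n.choose j = m.choose (j+1) := by
  induction m with
  | zero => simp
  | succ m ih =>
    rw [Finset.sum_range_succ, ih, Nat.choose_succ_succ']
    omega

/-- basis change under the shift `m ↦ m - 1`. -/
lemma choose_pred_transform (D : ℕ) (a : ℕ → ℝ) :
    ∃ b : ℕ → ℝ, b D = a D ∧ ∀ m, 1 ≤ m →
      ∑ j ∈ range (D+1), a j * (((m-1).choose j : ℕ) : ℝ)
        = ∑ j ∈ range (D+1), b j * (m.choose j : ℝ) := by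
  induction D generalizing a with
  | zero => exact ⟨a, rfl, fun m hm => by simp⟩
  | succ D ih =>
    obtain ⟨b₀, hb₀top, hb₀⟩ := ih (fun j => a (j+1))
    refine ⟨fun j => a j - (if j ≤ D then b₀ j else 0), by simp, fun m hm => ?_⟩
    obtain ⟨m', rfl⟩ : ∃ m', m = m' + 1 := ⟨m - 1, by omega⟩
    simp only [Nat.add_sub_cancel]
    have pascal : ∀ j, ((m'+1).choose (j+1) : ℝ) = (m'.choose j : ℝ) + (m'.choose (j+1) : ℝ) := by
      intro j
      rw [Nat.choose_succ_succ]
      push_cast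
      ring
    have lhs_eq : ∑ j ∈ range (D+2), a j * (m'.choose j : ℝ)
        = a 0 + ∑ j ∈ range (D+1), a (j+1) * (m'.choose (j+1) : ℝ) := by
      rw [Finset.sum_range_succ']
      simp [add_comm]
    have rhs_split : ∑ j ∈ range (D+2), (a j - (if j ≤ D then b₀ j else 0)) * ((m'+1).choose j : ℝ)
        = ∑ j ∈ range (D+2), a j * ((m'+1).choose j : ℝ)
          - ∑ j ∈ range (D+1), b₀ j * ((m'+1).choose j : ℝ) := by
      rw [← pad_sum (by omega : D ≤ D+1) b₀ (m'+1)]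
      rw [← Finset.sum_sub_distrib]
      exact Finset.sum_congr rfl fun j _ => by ring
    have rhs_a : ∑ j ∈ range (D+2), a j * ((m'+1).choose j : ℝ)
        = a 0 + ∑ j ∈ range (D+1), a (j+1) * ((m'+1).choose (j+1) : ℝ) := by
      rw [Finset.sum_range_succ']
      simp [add_comm]
    have hb := hb₀ (m'+1) (by omega)
    simp only [Nat.add_sub_cancel] at hb
    rw [lhs_eq, rhs_split, rhs_a, ← hb]
    have : ∑ j ∈ range (D+1), a (j+1) * ((m'+1).choose (j+1) : ℝ)
        = ∑ j ∈ range (D+1), (a (j+1) * (m'.choose j : ℝ) + a (j+1) * (m'.choose (j+1) : ℝ)) := by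
      refine Finset.sum_congr rfl fun j _ => ?_
      rw [pascal j]; ring
    rw [this, Finset.sum_add_distrib]
    ring

lemma EvP.add {D : ℕ} {a b : ℕ → ℝ} {h h' : ℕ → ℝ} (ha : EvP D a h) (hb : EvP D b h') :
    EvP D (fun j => a j + b j) (fun m => h m + h' m) := by
  obtain ⟨N, hN⟩ := ha
  obtain ⟨M, hM⟩ := hb
  exact ⟨max N M, fun m hm => by
    show h m + h' m = ∑ j ∈ range (D+1), (a j + b j) * (m.choose j : ℝ)
    rw [hN m (le_trans (le_max_left _ _) hm), hM m (le_trans (le_max_right _ _) hm),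
      ← Finset.sum_add_distrib]
    exact Finset.sum_congr rfl fun j _ => by ring⟩

lemma EvP.pad {D D' : ℕ} {a : ℕ → ℝ} {h : ℕ → ℝ} (ha : EvP D a h) (hDD : D ≤ D') :
    EvP D' (fun j => if j ≤ D then a j else 0) h := by
  obtain ⟨N, hN⟩ := ha
  exact ⟨N, fun m hm => by
    show h m = ∑ j ∈ range (D'+1), (if j ≤ D then a j else 0) * (m.choose j : ℝ)
    rw [hN m hm, ← pad_sum hDD a m]⟩

lemma EvP.smul {D : ℕ} {a : ℕ → ℝ} {h : ℕ → ℝ} (ha : EvP D a h) (c : ℝ) :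
    EvP D (fun j => c * a j) (fun m => c * h m) := by
  obtain ⟨N, hN⟩ := ha
  exact ⟨N, fun m hm => by
    show c * h m = ∑ j ∈ range (D+1), (c * a j) * (m.choose j : ℝ)
    rw [hN m hm, Finset.mul_sum]
    exact Finset.sum_congr rfl fun j _ => by ring⟩

lemma EvP.shift {D : ℕ} {a : ℕ → ℝ} {h : ℕ → ℝ} (ha : EvP D a h) :
    ∃ b : ℕ → ℝ, b D = a D ∧ EvP D b (fun m => h (m-1)) := by
  obtain ⟨N, hN⟩ := ha
  obtain ⟨b, hbtop, hb⟩ := choose_pred_transform D a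
  exact ⟨b, hbtop, ⟨N + 1, fun m hm => by
    show h (m-1) = ∑ j ∈ range (D+1), b j * (m.choose j : ℝ)
    rw [hN (m-1) (by omega), hb m (by omega)]⟩⟩

lemma EvP.sumRange {D : ℕ} {a : ℕ → ℝ} {h : ℕ → ℝ} (ha : EvP D a h) :
    ∃ b : ℕ → ℝ, b (D+1) = a D ∧ EvP (D+1) b (fun m => ∑ n ∈ range m, h n) := by
  obtain ⟨N, hN⟩ := ha
  set K : ℝ := ∑ n ∈ range N, h n - ∑ n ∈ range N, ∑ j ∈ range (D+1), a j * (n.choose j : ℝ)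
    with hK
  refine ⟨fun j => if j = 0 then K + a 0 * 0 else a (j-1), by simp, N, fun m hm => ?_⟩
  · -- ∑_{n<m} h n = K + ∑_j a j C(m, j+1)
    have hsplit : ∑ n ∈ range m, h n
        = ∑ n ∈ range N, h n + ∑ n ∈ Ico N m, h n := by
      rw [range_eq_Ico, ← Finset.sum_Ico_consecutive _ (Nat.zero_le N) hm, ← range_eq_Ico]
    have hIco : ∑ n ∈ Ico N m, h n
        = ∑ n ∈ Ico N m, ∑ j ∈ range (D+1), a j * (n.choose j : ℝ) :=
      Finset.sum_congr rfl fun n hn => hN n (Finset.mem_Ico.1 hn).1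
    have hfull : ∑ n ∈ range m, ∑ j ∈ range (D+1), a j * (n.choose j : ℝ)
        = ∑ n ∈ range N, ∑ j ∈ range (D+1), a j * (n.choose j : ℝ)
          + ∑ n ∈ Ico N m, ∑ j ∈ range (D+1), a j * (n.choose j : ℝ) := by
      rw [range_eq_Ico, ← Finset.sum_Ico_consecutive _ (Nat.zero_le N) hm, ← range_eq_Ico]
    have hswap : ∑ n ∈ range m, ∑ j ∈ range (D+1), a j * (n.choose j : ℝ)
        = ∑ j ∈ range (D+1), a j * (m.choose (j+1) : ℝ) := by
      rw [Finset.sum_comm]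
      refine Finset.sum_congr rfl fun j _ => ?_
      rw [← Finset.mul_sum]
      congr 1
      rw [← nat_sum_range_choose m j]
      push_cast
      rfl
    have : ∑ n ∈ range m, h n = K + ∑ j ∈ range (D+1), a j * (m.choose (j+1) : ℝ) := by
      rw [hsplit, hIco, ← hswap, hfull]
      ring
    show ∑ n ∈ range m, h n
      = ∑ j ∈ range (D+1+1), (if j = 0 then K + a 0 * 0 else a (j-1)) * (m.choose j : ℝ)
    rw [this]
    conv_rhs => rw [Finset.sum_range_succ']
    have h1 : ∀ j ∈ range (D+1),
        (if j+1 = 0 then K + a 0 * 0 else a (j+1-1)) * (m.choose (j+1) : ℝ)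
          = a j * (m.choose (j+1) : ℝ) := by
      intro j _
      norm_num
    rw [Finset.sum_congr rfl h1]
    norm_num
    ring

end SmolyakAux

namespace SmolyakAux
open Finset

lemma EvP.congr {D : ℕ} {a : ℕ → ℝ} {h h' : ℕ → ℝ} (ha : EvP D a h)
    (hh : ∃ M, ∀ m, M ≤ m → h' m = h m) : EvP D a h' := by
  obtain ⟨N, hN⟩ := ha
  obtain ⟨M, hM⟩ := hh
  exact ⟨max N M, fun m hm =>
    (hM m (le_trans (le_max_right _ _) hm)).trans (hN m (le_trans (le_max_left _ _) hm))⟩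

lemma EvP.const (D : ℕ) (c : ℝ) : EvP D (fun j => if j = 0 then c else 0) (fun _ => c) := by
  refine ⟨0, fun m _ => ?_⟩
  rw [Finset.sum_eq_single 0]
  · simp
  · intro j _ hj
    simp [hj]
  · simp

lemma F_one (m : ℕ) (hm : 1 ≤ m) : F 1 m = 2^m + 1 := by
  induction m, hm using Nat.le_induction with
  | base => norm_num [F, g, Finset.sum_range_succ]
  | succ m hm ih =>
    show (∑ t ∈ Finset.range (m+1+1), g t * F 0 (m+1-t)) = _
    rw [Finset.sum_range_succ]
    have hg : g (m+1) = 2^m := by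
      obtain ⟨s, rfl⟩ : ∃ s, m = s + 1 := ⟨m - 1, by omega⟩
      rfl
    have hF0 : F 0 (m+1-(m+1)) = 1 := rfl
    rw [hF0, hg]
    have : (∑ t ∈ Finset.range (m+1), g t * F 0 (m+1-t)) = F 1 m := by
      show _ = (∑ t ∈ Finset.range (m+1), g t * F 0 (m-t))
      exact Finset.sum_congr rfl fun t _ => rfl
    rw [this, ih]
    have : (2:ℕ)^(m+1) = 2 * 2^m := by ring
    omega

lemma H_one (m : ℕ) (hm : 1 ≤ m) : H 1 m = 1 := by
  rw [H, F_one m hm]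
  have h2 : (2:ℝ)^m ≠ 0 := by positivity
  push_cast
  field_simp
  ring

lemma H_evp (d : ℕ) (hd : 1 ≤ d) :
    ∃ a : ℕ → ℝ, a (d-1) = ((2:ℝ)^(d-1))⁻¹ ∧ EvP (d-1) a (H d) := by
  induction d, hd using Nat.le_induction with
  | base =>
    refine ⟨fun _ => 1, by norm_num, 1, fun m hm => ?_⟩
    rw [H_one m hm]
    simp
  | succ d hd ih =>
    obtain ⟨D, rfl⟩ : ∃ D, d = D + 1 := ⟨d - 1, by omega⟩
    simp only [Nat.add_sub_cancel] at ih ⊢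
    obtain ⟨a, hatop, ha⟩ := ih
    obtain ⟨b2, hb2top, hb2⟩ := ha.shift
    obtain ⟨b3, hb3top, hb3⟩ := ha.sumRange
    obtain ⟨b4, hb4top, hb4⟩ := hb3.shift
    have p1 := ha.pad (by omega : D ≤ D + 1)
    have p2 := hb2.pad (by omega : D ≤ D + 1)
    have p3 := EvP.const (D+1) 1
    have p4 := hb4.smul (1/2)
    have q := ((p1.add p2).add p3).add p4
    refine ⟨_, ?_, q.congr ⟨1, fun m hm => ?_⟩⟩
    · show ((if D+1 ≤ D then a (D+1) else 0) + (if D+1 ≤ D then b2 (D+1) else 0)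
          + (if D+1 = 0 then (1:ℝ) else 0)) + (1/2) * b4 (D+1) = ((2:ℝ)^(D+1))⁻¹
      rw [if_neg (by omega), if_neg (by omega), if_neg (by omega), hb4top, hb3top, hatop]
      rw [pow_succ]
      field_simp
      ring
    · show H (D+1+1) m = H (D+1) m + H (D+1) (m-1) + 1 + (1/2) * ∑ n ∈ range (m-1), H (D+1) n
      exact H_rec (D+1) m hm

end SmolyakAux

namespace SmolyakAux
open Finset Filter

lemma tendsto_choose_div_pow (j : ℕ) :
    Tendsto (fun m : ℕ => (m.choose j : ℝ) / (m : ℝ)^j) atTop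
      (nhds (1 / (j.factorial : ℝ))) := by
  have hprod : Tendsto (fun m : ℕ => (1 / (j.factorial : ℝ))
      * ∏ i ∈ range j, (((m:ℝ) - i) / (m:ℝ))) atTop (nhds ((1 / (j.factorial : ℝ)) * 1)) := by
    refine Tendsto.const_mul _ ?_
    have h1 : Tendsto (fun m : ℕ => ∏ i ∈ range j, (((m:ℝ) - i) / (m:ℝ))) atTop
        (nhds (∏ _i ∈ range j, 1)) := by
      refine tendsto_finset_prod _ fun i _ => ?_
      have hev : (fun m : ℕ => ((m:ℝ) - i) / (m:ℝ))
          =ᶠ[atTop] (fun m : ℕ => 1 - (i:ℝ)/(m:ℝ)) := by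
        filter_upwards [eventually_ge_atTop 1] with m hm
        have : (m:ℝ) ≠ 0 := by positivity
        field_simp
      rw [show (1:ℝ) = 1 - 0 by ring]
      refine Tendsto.congr' hev.symm ?_
      exact Tendsto.sub tendsto_const_nhds
        (tendsto_const_div_atTop_nhds_zero_nat (i:ℝ))
    simpa using h1
  rw [show (1 / (j.factorial : ℝ)) = (1 / (j.factorial : ℝ)) * 1 by ring]
  refine Tendsto.congr' ?_ hprod
  filter_upwards [eventually_ge_atTop (max j 1)] with m hm
  have hmj : j ≤ m := le_trans (le_max_left _ _) hm
  have hm1 : 1 ≤ m := le_trans (le_max_right _ _) hm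
  have hm0 : (m:ℝ) ≠ 0 := by positivity
  have hdesc : ((m.descFactorial j : ℕ) : ℝ) = (j.factorial : ℝ) * (m.choose j : ℝ) := by
    rw [Nat.descFactorial_eq_factorial_mul_choose]
    push_cast
    ring
  have hdesc2 : ((m.descFactorial j : ℕ) : ℝ) = ∏ i ∈ range j, ((m:ℝ) - i) := by
    rw [Nat.descFactorial_eq_prod_range]
    push_cast
    refine Finset.prod_congr rfl fun i hi => ?_
    rw [mem_range] at hi
    rw [Nat.cast_sub (by omega)]
  have hsplit : ∏ i ∈ range j, (((m:ℝ) - i) / (m:ℝ))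
      = (∏ i ∈ range j, ((m:ℝ) - i)) / (m:ℝ)^j := by
    rw [Finset.prod_div_distrib]
    congr 1
    rw [Finset.prod_const]
    simp
  rw [hsplit, ← hdesc2, hdesc]
  have hfact : (j.factorial : ℝ) ≠ 0 := by positivity
  field_simp

lemma tendsto_sum_choose_div_pow (D : ℕ) (a : ℕ → ℝ) :
    Tendsto (fun m : ℕ => (∑ j ∈ range (D+1), a j * (m.choose j : ℝ)) / (m : ℝ)^D) atTop
      (nhds (a D / (D.factorial : ℝ))) := by
  have hterm : ∀ j ∈ range (D+1), Tendsto (fun m : ℕ => a j * ((m.choose j : ℝ) / (m : ℝ)^D))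
      atTop (nhds (a j * (if j = D then 1 / (D.factorial : ℝ) else 0))) := by
    intro j hj
    rw [mem_range] at hj
    refine Tendsto.const_mul _ ?_
    rcases eq_or_ne j D with rfl | hne
    · simpa using tendsto_choose_div_pow j
    · rw [if_neg hne]
      have hjD : j < D := by omega
      have h1 : Tendsto (fun m : ℕ => ((m.choose j : ℝ) / (m : ℝ)^j) * ((m:ℝ)⁻¹)^(D-j))
          atTop (nhds ((1 / (j.factorial : ℝ)) * 0)) := by
        refine Tendsto.mul (tendsto_choose_div_pow j) ?_
        have : Tendsto (fun m : ℕ => ((m:ℝ))⁻¹) atTop (nhds 0) :=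
          tendsto_inv_atTop_zero.comp tendsto_natCast_atTop_atTop
        have := this.pow (D-j)
        simpa [zero_pow (by omega : D - j ≠ 0)] using this
      rw [show (0:ℝ) = (1 / (j.factorial : ℝ)) * 0 by ring]
      refine Tendsto.congr' ?_ h1
      filter_upwards [eventually_ge_atTop 1] with m hm
      have hm0 : (m:ℝ) ≠ 0 := by positivity
      have hpow : (m:ℝ)^j * (m:ℝ)^(D-j) = (m:ℝ)^D := by
        rw [← pow_add]
        congr 1
        omega
      rw [inv_pow, div_eq_mul_inv, mul_assoc, ← mul_inv, hpow, ← div_eq_mul_inv]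
  have := tendsto_finset_sum (range (D+1)) hterm
  have hsum : ∑ j ∈ range (D+1), a j * (if j = D then 1 / (D.factorial : ℝ) else 0)
      = a D / (D.factorial : ℝ) := by
    rw [Finset.sum_eq_single D]
    · simp [div_eq_mul_inv]
    · intro j _ hne
      simp [hne]
    · intro h
      exact absurd (self_mem_range_succ D) h
  rw [← hsum]
  refine Tendsto.congr' ?_ this
  filter_upwards [] with m
  rw [Finset.sum_div]
  exact Finset.sum_congr rfl fun j _ => by ring

end SmolyakAux



open Filter in
/-- For the growth function with `f(1) = 1` and `f(k) = 2^(k-1) + 1` for `k ≥ 2`, for each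
fixed `d ≥ 1` one has `N(d, μ) / (2^μ μ^(d-1)) → 1/(2^(d-1)·(d-1)!)` as `μ → ∞`. -/
theorem smolyakCard_of_two_pow_pred_add_one_asymptotics
    (f : ℕ → ℕ) (hf1 : f 1 = 1) (hf : ∀ k, 2 ≤ k → f k = 2 ^ (k - 1) + 1)
    (S : ℕ → Finset ℝ) (hS_nested : ∀ k, 1 ≤ k → S k ⊆ S (k + 1))
    (hS_card : ∀ k, 1 ≤ k → (S k).card = f k)
    (d : ℕ) (hd : 1 ≤ d) :
    Tendsto (fun μ : ℕ => (smolyakCard S d μ : ℝ) / (2 ^ μ * (μ : ℝ) ^ (d - 1)))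
      atTop (nhds (1 / (2 ^ (d - 1) * (d - 1).factorial))) := by
  classical
  open SmolyakAux Finset in
  obtain ⟨a, hatop, N, hN⟩ := SmolyakAux.H_evp d hd
  set D := d - 1 with hD
  have hcard : ∀ μ, smolyakCard S d μ = SmolyakAux.F d μ := fun μ =>
    SmolyakAux.smolyakCard_eq_F S f hf1 hf hS_nested hS_card d μ hd
  have t1 := SmolyakAux.tendsto_sum_choose_div_pow D a
  have t2 : Tendsto (fun μ : ℕ => ((2:ℝ)^μ * (μ:ℝ)^D)⁻¹) atTop (nhds 0) := by
    have hbig : Tendsto (fun μ : ℕ => (2:ℝ)^μ * (μ:ℝ)^D) atTop atTop := by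
      refine tendsto_atTop_mono' atTop ?_ (tendsto_pow_atTop_atTop_of_one_lt one_lt_two)
      filter_upwards [eventually_ge_atTop 1] with μ hμ
      have h1 : (1:ℝ) ≤ (μ:ℝ)^D := one_le_pow₀ (by exact_mod_cast hμ : (1:ℝ) ≤ (μ:ℝ))
      nlinarith [pow_pos (by norm_num : (0:ℝ) < 2) μ]
    exact hbig.inv_tendsto_atTop
  have tsum := t1.add t2
  have hval : a D / (D.factorial : ℝ) + 0
      = 1 / (2 ^ D * ((D.factorial : ℕ) : ℝ)) := by
    rw [add_zero, hatop]
    have h1 : (2:ℝ)^D ≠ 0 := by positivity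
    have h2 : ((D.factorial : ℕ) : ℝ) ≠ 0 := by positivity
    field_simp
  rw [hval] at tsum
  refine tsum.congr' ?_
  filter_upwards [eventually_ge_atTop (max N 1)] with μ hμ
  have hNμ : N ≤ μ := le_trans (le_max_left _ _) hμ
  have h1μ : 1 ≤ μ := le_trans (le_max_right _ _) hμ
  have hμ0 : (μ:ℝ) ≠ 0 := by
    have : (0:ℕ) < μ := h1μ
    positivity
  have hpD : (μ:ℝ)^D ≠ 0 := by positivity
  have hp2 : (2:ℝ)^μ ≠ 0 := by positivity
  have hFH : (SmolyakAux.F d μ : ℝ) = 2^μ * SmolyakAux.H d μ + 1 := SmolyakAux.H_eq d μ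
  have hHs : SmolyakAux.H d μ = ∑ j ∈ Finset.range (D+1), a j * (μ.choose j : ℝ) := hN μ hNμ
  show (∑ j ∈ Finset.range (D+1), a j * (μ.choose j : ℝ)) / (μ:ℝ)^D
      + ((2:ℝ)^μ * (μ:ℝ)^D)⁻¹ = (smolyakCard S d μ : ℝ) / (2 ^ μ * (μ : ℝ) ^ D)
  rw [hcard μ, hFH, hHs]
  field_simp
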